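/- Let m ≥ 1 and let n be a nonnegative integer with n ≡ 0 (mod 2^{m+1}). Then r_m(n) = Σ_{k=0}^{n/2^{m+1}} r_{m-1}(2^m·k). -/

import Mathlib

/-- The integer partitioned by the binary partition `α`, where `α i` is the
number of parts equal to `2 ^ i` (so `α i` is the `α_{i+1}` of the paper). -/
def binWeight (α : ℕ →₀ ℕ) : ℕ := α.sum fun i a => a * 2 ^ i

/-- `Pm m n` is the set of binary partitions of `n` satisfying the divisibility
conditions `2 ^ (m + 2 - i) ∣ α_i` for `1 ≤ i ≤ m + 1` (written here with the
index shifted down by one).  For `n < 0` the set is empty. -/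
def Pm (m : ℕ) (n : ℤ) : Set (ℕ →₀ ℕ) :=
  {α | (binWeight α : ℤ) = n ∧ ∀ i ≤ m, 2 ^ (m + 1 - i) ∣ α i}

/-- `r m n` is the number of binary partitions of `n` satisfying the divisibility
conditions `2 ^ (m + 2 - i) ∣ α_i` for `1 ≤ i ≤ m + 1`. -/
noncomputable def r (m : ℕ) (n : ℤ) : ℕ := Nat.card (Pm m n)

open Finsupp

def succEmb : ℕ ↪ ℕ := ⟨Nat.succ, Nat.succ_injective⟩

noncomputable def ftail (α : ℕ →₀ ℕ) : ℕ →₀ ℕ :=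
  Finsupp.comapDomain Nat.succ α (Nat.succ_injective.injOn)

@[simp] lemma ftail_apply (α : ℕ →₀ ℕ) (i : ℕ) : ftail α i = α (i + 1) := rfl

noncomputable def fcons (a : ℕ) (β : ℕ →₀ ℕ) : ℕ →₀ ℕ :=
  Finsupp.single 0 a + Finsupp.embDomain succEmb β

@[simp] lemma fcons_zero (a : ℕ) (β : ℕ →₀ ℕ) : fcons a β 0 = a := by
  have h0 : (0 : ℕ) ∉ Set.range succEmb := by
    rintro ⟨x, hx⟩; exact Nat.succ_ne_zero x hx
  simp [fcons, Finsupp.embDomain_notin_range _ _ _ h0]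

@[simp] lemma fcons_succ (a : ℕ) (β : ℕ →₀ ℕ) (i : ℕ) : fcons a β (i + 1) = β i := by
  have : Finsupp.embDomain succEmb β (i + 1) = β i :=
    Finsupp.embDomain_apply_self succEmb β i
  simp [fcons, this, Finsupp.single_apply]

lemma ftail_fcons (a : ℕ) (β : ℕ →₀ ℕ) : ftail (fcons a β) = β := by
  ext i; simp

lemma fcons_ftail (α : ℕ →₀ ℕ) : fcons (α 0) (ftail α) = α := by
  ext i; cases i with
  | zero => simp
  | succ j => simp

lemma binWeight_fcons (a : ℕ) (β : ℕ →₀ ℕ) :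
    binWeight (fcons a β) = a + 2 * binWeight β := by
  unfold binWeight fcons
  rw [Finsupp.sum_add_index' (by simp) (by intros; ring)]
  rw [Finsupp.sum_single_index (by simp), Finsupp.sum_embDomain]
  simp only [succEmb, Function.Embedding.coeFn_mk, Nat.succ_eq_add_one, pow_zero, mul_one]
  congr 1
  rw [Finsupp.mul_sum]
  apply Finsupp.sum_congr
  intro i _
  ring

lemma binWeight_eq (α : ℕ →₀ ℕ) : binWeight α = α 0 + 2 * binWeight (ftail α) := by
  conv_lhs => rw [← fcons_ftail α]
  rw [binWeight_fcons]

lemma apply_le_binWeight (α : ℕ →₀ ℕ) (i : ℕ) : α i * 2 ^ i ≤ binWeight α := by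
  by_cases h : i ∈ α.support
  · exact Finset.single_le_sum (f := fun j => α j * 2 ^ j) (fun j _ => Nat.zero_le _) h
  · simp [Finsupp.notMem_support_iff.mp h]

lemma Pm_finite (m : ℕ) (n : ℤ) : (Pm m n).Finite := by
  rcases le_or_gt 0 n with hn | hn
  · obtain ⟨N, rfl⟩ := Int.eq_ofNat_of_zero_le hn
    apply Set.Finite.subset
      (Set.finite_Iic (Finsupp.indicator (Finset.range (N + 1)) fun _ _ => N))
    intro α hα i
    have hw : binWeight α = N := by exact_mod_cast hα.1
    have hle : α i * 2 ^ i ≤ N := hw ▸ apply_le_binWeight α i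
    by_cases hz : α i = 0
    · simp [hz]
    · have h1 : 1 ≤ α i := Nat.one_le_iff_ne_zero.mpr hz
      have h2 : 2 ^ i ≤ N := le_trans (Nat.le_mul_of_pos_left _ h1) hle
      have hi : i ∈ Finset.range (N + 1) := by
        have := Nat.lt_two_pow_self (n := i)
        simp only [Finset.mem_range]; omega
      rw [Finsupp.indicator_of_mem hi]
      calc α i ≤ α i * 2 ^ i := Nat.le_mul_of_pos_right _ (Nat.pow_pos (n := i) (by norm_num))
        _ ≤ N := hle
  · convert Set.finite_empty
    ext α
    simp only [Pm, Set.mem_setOf_eq, Set.mem_empty_iff_false, iff_false, not_and]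
    intro h
    omega

theorem stmt3 (m : ℕ) (hm : 1 ≤ m) (n : ℕ) (hn : 2 ^ (m + 1) ∣ n) :
    r m n = ∑ k ∈ Finset.range (n / 2 ^ (m + 1) + 1), r (m - 1) ((2 ^ m * k : ℕ) : ℤ) := by
  obtain ⟨N, rfl⟩ := hn
  have hNdiv : 2 ^ (m + 1) * N / 2 ^ (m + 1) = N := by
    rw [Nat.mul_div_cancel_left _ (Nat.pow_pos (by norm_num))]
  rw [hNdiv]
  -- the forward map
  set T := fun k : Fin (N + 1) => ↥(Pm (m - 1) ((2 ^ m * (k : ℕ) : ℕ) : ℤ)) with hT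
  have key : ∀ α ∈ Pm m ((2 ^ (m + 1) * N : ℕ) : ℤ),
      binWeight (ftail α) / 2 ^ m ≤ N ∧ binWeight (ftail α) = 2 ^ m * (binWeight (ftail α) / 2 ^ m) ∧
      ftail α ∈ Pm (m - 1) ((2 ^ m * (binWeight (ftail α) / 2 ^ m) : ℕ) : ℤ) := by
    intro α hα
    have hw : binWeight α = 2 ^ (m + 1) * N := by exact_mod_cast hα.1
    have hd0 : 2 ^ (m + 1) ∣ α 0 := by simpa using hα.2 0 (Nat.zero_le m)
    obtain ⟨j, hj⟩ := hd0
    have hsplit := binWeight_eq α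
    set B := binWeight (ftail α) with hB
    have hkey2 : 2 ^ (m + 1) * N = 2 ^ (m + 1) * j + 2 * B := by omega
    have hmul : 2 ^ (m + 1) * j ≤ 2 ^ (m + 1) * N := by omega
    have hjN : j ≤ N :=
      Nat.le_of_mul_le_mul_left hmul (Nat.pow_pos (n := m + 1) (by norm_num))
    have hsum : 2 ^ (m + 1) * j + 2 ^ (m + 1) * (N - j) = 2 ^ (m + 1) * N := by
      rw [← Nat.mul_add]
      congr 1
      omega
    have hdbl : 2 ^ (m + 1) * (N - j) = 2 * (2 ^ m * (N - j)) := by ring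
    have hBval : B = 2 ^ m * (N - j) := by omega
    have hdivB : B / 2 ^ m = N - j := by
      rw [hBval, Nat.mul_div_cancel_left _ (Nat.pow_pos (by norm_num))]
    have hnat : B = 2 ^ m * (B / 2 ^ m) := by rw [hdivB]; exact hBval
    refine ⟨by omega, hnat, ?_, ?_⟩
    · exact_mod_cast hnat
    · intro i hi
      have := hα.2 (i + 1) (by omega)
      have he : m + 1 - (i + 1) = m - 1 + 1 - i := by omega
      rw [← he]
      simpa using this
  let f : ↥(Pm m ((2 ^ (m + 1) * N : ℕ) : ℤ)) → Σ k : Fin (N + 1), T k :=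
    fun α => ⟨⟨binWeight (ftail α.1) / 2 ^ m, Nat.lt_succ_of_le (key α.1 α.2).1⟩,
      ⟨ftail α.1, (key α.1 α.2).2.2⟩⟩
  have hfbij : Function.Bijective f := by
    constructor
    · rintro ⟨α, hα⟩ ⟨α', hα'⟩ h
      have htl : ftail α = ftail α' :=
        congrArg (fun s : Σ k : Fin (N + 1), T k => (s.snd.1 : ℕ →₀ ℕ)) h
      have hw : binWeight α = 2 ^ (m + 1) * N := by exact_mod_cast hα.1
      have hw' : binWeight α' = 2 ^ (m + 1) * N := by exact_mod_cast hα'.1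
      have h0 : α 0 = α' 0 := by
        have e1 := binWeight_eq α
        have e2 := binWeight_eq α'
        rw [htl] at e1
        omega
      apply Subtype.ext
      show α = α'
      rw [← fcons_ftail α, ← fcons_ftail α', htl, h0]
    · rintro ⟨⟨k, hk⟩, ⟨β, hβ⟩⟩
      have hkN : k ≤ N := Nat.lt_succ_iff.mp hk
      have hwβ : binWeight β = 2 ^ m * k := by exact_mod_cast hβ.1
      have hmem : fcons (2 ^ (m + 1) * (N - k)) β ∈ Pm m ((2 ^ (m + 1) * N : ℕ) : ℤ) := by
        constructor
        · have h1 : binWeight (fcons (2 ^ (m + 1) * (N - k)) β)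
              = 2 ^ (m + 1) * (N - k) + 2 * (2 ^ m * k) := by
            rw [binWeight_fcons, hwβ]
          have h2 : 2 * (2 ^ m * k) = 2 ^ (m + 1) * k := by ring
          have h3 : 2 ^ (m + 1) * (N - k) + 2 ^ (m + 1) * k = 2 ^ (m + 1) * N := by
            rw [← Nat.mul_add]
            congr 1
            omega
          have hfin : binWeight (fcons (2 ^ (m + 1) * (N - k)) β) = 2 ^ (m + 1) * N := by
            omega
          exact_mod_cast congrArg (Nat.cast : ℕ → ℤ) hfin
        · intro i hi
          cases i with
          | zero => simp [Nat.sub_zero]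
          | succ j =>
            rw [fcons_succ]
            have := hβ.2 j (by omega)
            have he : m + 1 - (j + 1) = m - 1 + 1 - j := by omega
            rw [he]
            exact this
      refine ⟨⟨fcons (2 ^ (m + 1) * (N - k)) β, hmem⟩, ?_⟩
      simp only [f]
      have htl : ftail (fcons (2 ^ (m + 1) * (N - k)) β) = β := ftail_fcons _ _
      have hkval : binWeight (ftail (fcons (2 ^ (m + 1) * (N - k)) β)) / 2 ^ m = k := by
        rw [htl, hwβ, Nat.mul_div_cancel_left _ (Nat.pow_pos (by norm_num))]
      exact Sigma.subtype_ext (Fin.ext hkval) htl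
  have e : ↥(Pm m ((2 ^ (m + 1) * N : ℕ) : ℤ)) ≃ Σ k : Fin (N + 1), T k :=
    Equiv.ofBijective f hfbij
  haveI : ∀ k : Fin (N + 1), Finite (T k) := fun k => (Pm_finite _ _).to_subtype
  haveI : ∀ k : Fin (N + 1), Fintype (T k) := fun k => Fintype.ofFinite _
  haveI : Finite ↥(Pm m ((2 ^ (m + 1) * N : ℕ) : ℤ)) := (Pm_finite _ _).to_subtype
  haveI : Fintype ↥(Pm m ((2 ^ (m + 1) * N : ℕ) : ℤ)) := Fintype.ofFinite _
  have : r m ((2 ^ (m + 1) * N : ℕ) : ℤ) = Nat.card (Σ k : Fin (N + 1), T k) := by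
    rw [r, Nat.card_congr e]
  rw [this, Nat.card_eq_fintype_card, Fintype.card_sigma]
  rw [← Fin.sum_univ_eq_sum_range (fun k => r (m - 1) ((2 ^ m * k : ℕ) : ℤ))]
  apply Finset.sum_congr rfl
  intro k _
  rw [r, Nat.card_eq_fintype_card]
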